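/- arXiv:2011.00804 — 3 statements merged into one kernel-verified Lean document; each statement's English description precedes it below -/
import Mathlib

section
/- Let $0<c<c_*$, $\lambda_3<0$, $2<p<\frac{10}{3}$, $\delta_p=\frac{3(p-2)}{2p}$, $\Lambda,\mathcal{C}_4,\mathcal{C}_p>0$, and set $t_{c_*}=\frac{2-p\delta_p}{(3-p\delta_p)\Lambda\mathcal{C}_4^4 c_*}$ and $\varphi_c(t)=\frac{1}{2}t^{2-p\delta_p}-\frac{\Lambda\mathcal{C}_4^4 c}{2}t^{3-p\delta_p}$, where $c_*=\big\{\frac{p}{4(3-p\delta_p)|\lambda_3|\mathcal{C}_p^p}\big[\frac{2-p\delta_p}{(3-p\delta_p)\Lambda\mathcal{C}_4^4}\big]^{2-p\delta_p}\big\}^{\frac{1}{2(4-p)}}$. Then $\varphi_c\big(\tfrac{c}{c_*}t_{c_*}\big)>\frac{2|\lambda_3|\mathcal{C}_p^p c^{p(1-\delta_p)}}{p}$. -/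
open Real

/-- For `0 < c < c_*`, `φ_c((c/c_*) t_{c_*}) > 2|λ₃|C_p^p c^{p(1-δ_p)}/p`, where
`φ_c(t) = ½t^{2-pδ_p} - (ΛC₄⁴c/2) t^{3-pδ_p}` and `t_{c_*} = (2-pδ_p)/((3-pδ_p)ΛC₄⁴c_*)`. -/
theorem stmt_9 (c lam3 p δp Λ C4 Cp : ℝ) (hc : 0 < c) (hlam3 : lam3 < 0)
    (hp : 2 < p) (hp' : p < 10 / 3) (hδ : δp = 3 * (p - 2) / (2 * p))
    (hΛ : 0 < Λ) (hC4 : 0 < C4) (hCp : 0 < Cp)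
    (cstar tstar : ℝ)
    (hcstar : cstar = (p / (4 * (3 - p * δp) * |lam3| * Cp ^ p) *
        ((2 - p * δp) / ((3 - p * δp) * Λ * C4 ^ 4)) ^ (2 - p * δp))
          ^ (1 / (2 * (4 - p))))
    (hccstar : c < cstar)
    (htstar : tstar = (2 - p * δp) / ((3 - p * δp) * Λ * C4 ^ 4 * cstar)) :
    (1 / 2) * (c / cstar * tstar) ^ (2 - p * δp) -
        Λ * C4 ^ 4 * c / 2 * (c / cstar * tstar) ^ (3 - p * δp) >
      2 * |lam3| * Cp ^ p * c ^ (p * (1 - δp)) / p := by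
  have hp0 : 0 < p := by linarith
  have hpδ : p * δp = 3 * (p - 2) / 2 := by
    rw [hδ]; field_simp
  set A := 2 - p * δp with hAdef
  set D := 3 - p * δp with hDdef
  have hA : A = (10 - 3 * p) / 2 := by rw [hAdef, hpδ]; ring
  have hDeq : D = (12 - 3 * p) / 2 := by rw [hDdef, hpδ]; ring
  have hA0 : 0 < A := by rw [hA]; linarith
  have hD0 : 0 < D := by rw [hDeq]; linarith
  have hK0 : 0 < |lam3| * Cp ^ p :=
    mul_pos (abs_pos.2 (ne_of_lt hlam3)) (rpow_pos_of_pos hCp p)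
  have hlam0 : 0 < |lam3| := abs_pos.2 (ne_of_lt hlam3)
  have hCpp : 0 < Cp ^ p := rpow_pos_of_pos hCp p
  set B := D * Λ * C4 ^ 4 with hBdef
  have hB0 : 0 < B := mul_pos (mul_pos hD0 hΛ) (pow_pos hC4 4)
  have hX0 : 0 < p / (4 * D * |lam3| * Cp ^ p) * (A / B) ^ A := by
    apply mul_pos
    · apply div_pos hp0
      positivity
    · exact rpow_pos_of_pos (div_pos hA0 hB0) A
  have hcs0 : 0 < cstar := by rw [hcstar]; exact rpow_pos_of_pos hX0 _
  have h4p : (0:ℝ) < 4 - p := by linarith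
  have he : (2 * (4 - p)) ≠ 0 := by positivity
  have hXpow : cstar ^ (2 * (4 - p)) = p / (4 * D * |lam3| * Cp ^ p) * (A / B) ^ A := by
    rw [hcstar, ← Real.rpow_mul hX0.le, one_div_mul_cancel he, Real.rpow_one]
  have hts : tstar = (A / B) / cstar := by rw [htstar, div_div]
  have hts0 : 0 < tstar := by rw [hts]; exact div_pos (div_pos hA0 hB0) hcs0
  set s := c / cstar with hs_def
  have hs0 : 0 < s := div_pos hc hcs0
  have hs1 : s < 1 := (div_lt_one hcs0).2 hccstar
  have hc_eq : c = s * cstar := by rw [hs_def]; field_simp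
  have hτ0 : 0 < s * tstar := mul_pos hs0 hts0
  have hABA : (A / B) ^ A = cstar ^ (2 * (4 - p)) * (4 * D * |lam3| * Cp ^ p) / p := by
    rw [hXpow]; field_simp
  have hcsplit : cstar ^ (2 * (4 - p)) = cstar ^ ((6 - p) / 2) * cstar ^ A := by
    rw [← Real.rpow_add hcs0]
    congr 1
    rw [hA]; ring
  have hcsA : 0 < cstar ^ A := rpow_pos_of_pos hcs0 A
  have hcsE : 0 < cstar ^ ((6 - p) / 2) := rpow_pos_of_pos hcs0 _
  have hTA : tstar ^ A = cstar ^ ((6 - p) / 2) * (4 * D * |lam3| * Cp ^ p) / p := by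
    rw [hts, Real.div_rpow (div_nonneg hA0.le hB0.le) hcs0.le, hABA, hcsplit]
    field_simp
  have hDA : D = A + 1 := by rw [hA, hDeq]; ring
  have hmid : 1 / 2 - Λ * C4 ^ 4 * c / 2 * (s * tstar) = (D - s ^ 2 * A) / (2 * D) := by
    rw [hts, hBdef, hc_eq]
    field_simp
  have hgoal_lhs : 1 / 2 * (s * tstar) ^ A - Λ * C4 ^ 4 * c / 2 * (s * tstar) ^ D =
      s ^ A * cstar ^ ((6 - p) / 2) * (2 * (|lam3| * Cp ^ p) / p) * (D - s ^ 2 * A) := by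
    calc 1 / 2 * (s * tstar) ^ A - Λ * C4 ^ 4 * c / 2 * (s * tstar) ^ D
        = (s * tstar) ^ A * (1 / 2 - Λ * C4 ^ 4 * c / 2 * (s * tstar)) := by
          rw [hDA, Real.rpow_add hτ0, Real.rpow_one]; ring
      _ = (s ^ A * tstar ^ A) * ((D - s ^ 2 * A) / (2 * D)) := by
          rw [Real.mul_rpow hs0.le hts0.le, hmid]
      _ = s ^ A * (cstar ^ ((6 - p) / 2) * (4 * D * |lam3| * Cp ^ p) / p) *
            ((D - s ^ 2 * A) / (2 * D)) := by rw [hTA]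
      _ = s ^ A * cstar ^ ((6 - p) / 2) * (2 * (|lam3| * Cp ^ p) / p) * (D - s ^ 2 * A) := by
          field_simp
          ring
  have hexp2 : p * (1 - δp) = (6 - p) / 2 := by
    rw [hδ]; field_simp; ring
  have hexp3 : (6 - p) / 2 = A + (p - 2) := by rw [hA]; ring
  have hgoal_rhs : 2 * |lam3| * Cp ^ p * c ^ (p * (1 - δp)) / p =
      s ^ A * cstar ^ ((6 - p) / 2) * (2 * (|lam3| * Cp ^ p) / p) * s ^ (p - 2) := by
    rw [hexp2, hc_eq, Real.mul_rpow hs0.le hcs0.le, hexp3, Real.rpow_add hs0]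
    ring
  have h1 : s ^ (p - 2) < 1 := Real.rpow_lt_one hs0.le hs1 (by linarith)
  have h2 : s ^ 2 < 1 := pow_lt_one₀ hs0.le hs1 two_ne_zero
  have h3 : s ^ 2 * A < A := by
    calc s ^ 2 * A < 1 * A := mul_lt_mul_of_pos_right h2 hA0
      _ = A := one_mul A
  have hlt : s ^ (p - 2) < D - s ^ 2 * A := by rw [hDA]; linarith
  have hsA : 0 < s ^ A := rpow_pos_of_pos hs0 A
  have hpos : 0 < s ^ A * cstar ^ ((6 - p) / 2) * (2 * (|lam3| * Cp ^ p) / p) :=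
    mul_pos (mul_pos hsA hcsE) (by positivity)
  rw [hgoal_lhs, hgoal_rhs]
  exact mul_lt_mul_of_pos_left hlt hpos
end

section
/- Let $c>0$, $\lambda_3<0$, $2<p<\frac{10}{3}$, $\delta_p=\frac{3(p-2)}{2p}$, and suppose $0<c<c_*$. Then the function $h_c(t)=\frac{1}{2}t^2-\frac{\Lambda\mathcal{C}_4^4 c}{2}t^3-\frac{2|\lambda_3|\mathcal{C}_p^p c^{p(1-\delta_p)}}{p}t^{p\delta_p}$ has exactly two zeros $0<R_0(c)<R_1(c)$ in $(0,\infty)$, satisfies $h_c(t)>0$ if and only if $t\in(R_0(c),R_1(c))$, and attains a strictly negative local minimum on $(0,R_0(c))$ and a strictly positive global maximum on $(R_0(c),R_1(c))$. -/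
open Real Set

set_option maxHeartbeats 1600000

lemma aux_deriv (a b r : ℝ) {x : ℝ} (hx : 0 < x) :
    HasDerivAt (fun t : ℝ => 1/2 - a*t - b*t^r) (-a - b*(r*x^(r-1))) x := by
  have h1 : HasDerivAt (fun t : ℝ => t ^ r) (r * x^(r-1)) x :=
    Real.hasDerivAt_rpow_const (Or.inl hx.ne')
  have h3 : HasDerivAt (fun t : ℝ => a * t) a x := by
    simpa using (hasDerivAt_id x).const_mul a
  have h := ((hasDerivAt_const x ((1:ℝ)/2)).sub h3).sub (h1.const_mul b)
  rw [show -a - b*(r*x^(r-1)) = 0 - a - b*(r*x^(r-1)) by ring]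
  exact h

lemma aux_concave (a b r : ℝ) (hb : 0 < b) (hr : r < 0) :
    StrictConcaveOn ℝ (Set.Ioi 0) (fun t : ℝ => 1/2 - a*t - b*t^r) := by
  have hcont : ContinuousOn (fun t : ℝ => 1/2 - a*t - b*t^r) (Set.Ioi 0) := fun x hx =>
    (aux_deriv a b r hx).continuousAt.continuousWithinAt
  apply strictConcaveOn_of_deriv2_neg (convex_Ioi 0) hcont
  intro x hx
  rw [interior_Ioi] at hx
  have hx : (0:ℝ) < x := hx
  have hEq : Set.EqOn (deriv fun t : ℝ => 1/2 - a*t - b*t^r)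
      (fun y => -a - b*(r*y^(r-1))) (Set.Ioi 0) := fun y hy => (aux_deriv a b r hy).deriv
  have hevent : (deriv fun t : ℝ => 1/2 - a*t - b*t^r) =ᶠ[nhds x]
      (fun y => -a - b*(r*y^(r-1))) := Filter.eventuallyEq_of_mem (Ioi_mem_nhds hx) hEq
  show deriv (deriv fun t : ℝ => 1/2 - a*t - b*t^r) x < 0
  rw [hevent.deriv_eq]
  have h1 : HasDerivAt (fun y : ℝ => y ^ (r-1)) ((r-1) * x^(r-1-1)) x :=
    Real.hasDerivAt_rpow_const (Or.inl hx.ne')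
  have h2 : HasDerivAt (fun y : ℝ => -a - b*(r*y^(r-1)))
      (-(b*(r*((r-1)*x^(r-1-1))))) x := ((h1.const_mul r).const_mul b).const_sub (-a)
  rw [h2.deriv]
  have hp := Real.rpow_pos_of_pos hx (r-1-1)
  have : (0:ℝ) < r * (r-1) := mul_pos_of_neg_of_neg hr (by linarith)
  nlinarith [mul_pos (mul_pos hb this) hp]

lemma concave_between {f : ℝ → ℝ} {s : Set ℝ} (hf : StrictConcaveOn ℝ s f) {x y z : ℝ}
    (hx : x ∈ s) (hz : z ∈ s) (hxy : x < y) (hyz : y < z) :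
    ((z-y)/(z-x)) * f x + ((y-x)/(z-x)) * f z < f y := by
  have hxz : x < z := hxy.trans hyz
  have h1 : (0:ℝ) < (z-y)/(z-x) := by apply div_pos <;> linarith
  have h2 : (0:ℝ) < (y-x)/(z-x) := by apply div_pos <;> linarith
  have hzx : z - x ≠ 0 := sub_ne_zero_of_ne hxz.ne'
  have h3 : (z-y)/(z-x) + (y-x)/(z-x) = 1 := by
    rw [← add_div]
    rw [show z - y + (y - x) = z - x by ring, div_self hzx]
  have h := hf.2 hx hz hxz.ne h1 h2 h3
  have h4 : ((z-y)/(z-x)) • x + ((y-x)/(z-x)) • z = y := by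
    simp only [smul_eq_mul]
    field_simp
    ring
  rw [h4] at h
  simpa [smul_eq_mul] using h

set_option maxHeartbeats 1600000 in
theorem two_zeros (a b q : ℝ) (ha : 0 < a) (hb : 0 < b) (hq0 : 0 < q) (hq2 : q < 2)
    (hgood : b * (2 - q) / a < ((2 - q) / (2 * a * (3 - q))) ^ (3 - q)) :
    ∃ R0 R1 : ℝ, 0 < R0 ∧ R0 < R1 ∧
      (∀ t : ℝ, 0 < t →
        ((1 / 2) * t ^ 2 - a * t ^ 3 - b * t ^ q = 0 ↔ t = R0 ∨ t = R1)) ∧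
      (∀ t : ℝ, 0 < t →
        ((1 / 2) * t ^ 2 - a * t ^ 3 - b * t ^ q > 0 ↔ R0 < t ∧ t < R1)) ∧
      (∃ t0 ∈ Set.Ioo 0 R0,
        IsLocalMin (fun t : ℝ => (1 / 2) * t ^ 2 - a * t ^ 3 - b * t ^ q) t0 ∧
        (1 / 2) * t0 ^ 2 - a * t0 ^ 3 - b * t0 ^ q < 0) ∧
      (∃ t1 ∈ Set.Ioo R0 R1,
        ((1 / 2) * t1 ^ 2 - a * t1 ^ 3 - b * t1 ^ q > 0) ∧
        ∀ t : ℝ, 0 < t →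
          (1 / 2) * t ^ 2 - a * t ^ 3 - b * t ^ q ≤
            (1 / 2) * t1 ^ 2 - a * t1 ^ 3 - b * t1 ^ q) := by
  have h2q : (0:ℝ) < 2 - q := by linarith
  have h3q : (0:ℝ) < 3 - q := by linarith
  set H : ℝ → ℝ := fun t : ℝ => (1 / 2) * t ^ 2 - a * t ^ 3 - b * t ^ q with hHdef
  set f : ℝ → ℝ := fun t : ℝ => 1/2 - a*t - b*t^(q-2) with hfdef
  have hHf : ∀ t : ℝ, 0 < t → (1 / 2) * t ^ 2 - a * t ^ 3 - b * t ^ q = t^2 * f t := by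
    intro t ht
    have h1 : t ^ q = t ^ (q-2) * t^2 := by
      rw [← Real.rpow_natCast t 2, ← Real.rpow_add ht]
      norm_num
    simp only [hfdef]
    rw [h1]; ring
  have hconc : StrictConcaveOn ℝ (Set.Ioi 0) f := aux_concave a b (q-2) hb (by linarith)
  have hfc : ContinuousOn f (Set.Ioi 0) := fun x hx =>
    (aux_deriv a b (q-2) hx).continuousAt.continuousWithinAt
  -- the critical point τ
  set X := b * (2 - q) / a with hXdef
  have hX : 0 < X := div_pos (mul_pos hb h2q) ha
  set Y := (2 - q) / (2 * a * (3 - q)) with hYdef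
  have hY : 0 < Y := div_pos h2q (by positivity)
  set τ := X ^ (3-q)⁻¹ with hτdef
  have hτ : 0 < τ := Real.rpow_pos_of_pos hX _
  have hτpow : τ ^ (3-q) = X := by
    rw [hτdef, ← Real.rpow_mul hX.le, inv_mul_cancel₀ h3q.ne', Real.rpow_one]
  have hτY : τ < Y := by
    have h5 : (Y ^ (3-q)) ^ (3-q)⁻¹ = Y := by
      rw [← Real.rpow_mul hY.le, mul_inv_cancel₀ h3q.ne', Real.rpow_one]
    calc τ = X ^ (3-q)⁻¹ := rfl
      _ < (Y ^ (3-q)) ^ (3-q)⁻¹ := Real.rpow_lt_rpow hX.le hgood (by positivity)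
      _ = Y := h5
  have hbτ : b * τ ^ (q-2) = a * τ / (2-q) := by
    have h6 : τ ^ (q-2) = τ ^ (1:ℝ) / τ ^ (3-q) := by
      rw [show q-2 = 1 - (3-q) by ring, Real.rpow_sub hτ]
    rw [h6, Real.rpow_one, hτpow, hXdef]
    field_simp
  have hfτ : 0 < f τ := by
    have key : τ * (2*a*(3-q)) < 2-q := by
      rw [hYdef] at hτY
      exact (lt_div_iff₀ (by positivity)).mp hτY
    have hfeq : f τ = 1/2 - a*τ - a*τ/(2-q) := by
      simp only [hfdef]
      rw [hbτ]
    rw [hfeq, show (1:ℝ)/2 - a*τ - a*τ/(2-q) = ((2-q) - τ*(2*a*(3-q)))/(2*(2-q)) by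
      field_simp; ring]
    apply div_pos (by linarith) (by linarith)
  -- a small point where f is negative
  set y0 := (1/(2*b)) ^ (q-2)⁻¹ with hy0def
  have hy0 : 0 < y0 := Real.rpow_pos_of_pos (by positivity) _
  have hq2ne : q - 2 ≠ 0 := by
    intro h; linarith [sub_eq_zero.mp h]
  have hy0pow : y0 ^ (q-2) = 1/(2*b) := by
    rw [hy0def, ← Real.rpow_mul (by positivity), inv_mul_cancel₀ hq2ne, Real.rpow_one]
  set ε := min (τ/2) y0 with hεdef
  have hε0 : 0 < ε := lt_min (by linarith) hy0
  have hετ : ε < τ := lt_of_le_of_lt (min_le_left _ _) (by linarith)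
  have hfε : f ε < 0 := by
    have h7 : 1/(2*b) ≤ ε ^ (q-2) := by
      rcases eq_or_lt_of_le (min_le_right (τ/2) y0 : ε ≤ y0) with h | h
      · rw [hεdef, h, hy0pow]
      · have h8 := Real.rpow_lt_rpow_of_neg hε0 h (by linarith : q-2 < 0)
        rw [hy0pow] at h8
        exact h8.le
    have h8 : 1/2 ≤ b * ε ^ (q-2) := by
      calc (1:ℝ)/2 = b * (1/(2*b)) := by field_simp
        _ ≤ b * ε^(q-2) := mul_le_mul_of_nonneg_left h7 hb.le
    simp only [hfdef]
    have h9 := mul_pos ha hε0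
    linarith
  -- a large point where f is negative
  set M := max (τ+1) (1/a) with hMdef
  have hτM : τ < M := lt_of_lt_of_le (by linarith) (le_max_left _ _)
  have hM0 : 0 < M := hτ.trans hτM
  have hfM : f M < 0 := by
    have h9 : (1:ℝ) ≤ a * M := by
      calc (1:ℝ) = a * (1/a) := by field_simp
        _ ≤ a * M := mul_le_mul_of_nonneg_left (le_max_right _ _) ha.le
    have h10 : 0 < b * M ^ (q-2) := mul_pos hb (Real.rpow_pos_of_pos hM0 _)
    simp only [hfdef]
    nlinarith
  clear_value X Y τ y0 ε M
  -- intermediate value theorem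
  have hIcc1 : ContinuousOn f (Set.Icc ε τ) :=
    hfc.mono (fun x hx => lt_of_lt_of_le hε0 hx.1)
  obtain ⟨R0, hR0mem, hfR0⟩ := intermediate_value_Ioo hετ.le hIcc1 ⟨hfε, hfτ⟩
  have hIcc2 : ContinuousOn f (Set.Icc τ M) :=
    hfc.mono (fun x hx => lt_of_lt_of_le hτ hx.1)
  obtain ⟨R1, hR1mem, hfR1⟩ := intermediate_value_Ioo' hτM.le hIcc2 ⟨hfM, hfτ⟩
  have hR0pos : 0 < R0 := hε0.trans hR0mem.1
  have hR0τ : R0 < τ := hR0mem.2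
  have hτR1 : τ < R1 := hR1mem.1
  have hR01 : R0 < R1 := hR0τ.trans hτR1
  have hR1pos : 0 < R1 := hR0pos.trans hR01
  -- sign of f
  have hpos : ∀ t, R0 < t → t < R1 → 0 < f t := by
    intro t h1 h2
    have h := concave_between hconc (Set.mem_Ioi.mpr hR0pos) (Set.mem_Ioi.mpr hR1pos) h1 h2
    rw [hfR0, hfR1] at h
    simpa using h
  have hnegL : ∀ t, 0 < t → t < R0 → f t < 0 := by
    intro t ht h1
    have h := concave_between hconc (Set.mem_Ioi.mpr ht) (Set.mem_Ioi.mpr hτ) h1 hR0τ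
    rw [hfR0] at h
    have hA : 0 < (τ - R0)/(τ - t) := by apply div_pos <;> linarith
    have hB : 0 < (R0 - t)/(τ - t) := by apply div_pos <;> linarith
    by_contra hcon
    push_neg at hcon
    have h6 : 0 < (R0 - t)/(τ - t) * f τ := mul_pos hB hfτ
    have h7 : 0 ≤ (τ - R0)/(τ - t) * f t := mul_nonneg hA.le hcon
    linarith
  have hnegR : ∀ t, R1 < t → f t < 0 := by
    intro t h1
    have ht : 0 < t := hR1pos.trans h1
    have h := concave_between hconc (Set.mem_Ioi.mpr hτ) (Set.mem_Ioi.mpr ht) hτR1 h1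
    rw [hfR1] at h
    have hA : 0 < (t - R1)/(t - τ) := by apply div_pos <;> linarith
    have hB : 0 < (R1 - τ)/(t - τ) := by apply div_pos <;> linarith
    by_contra hcon
    push_neg at hcon
    have h6 : 0 < (t - R1)/(t - τ) * f τ := mul_pos hA hfτ
    have h7 : 0 ≤ (R1 - τ)/(t - τ) * f t := mul_nonneg hB.le hcon
    linarith
  -- continuity of H, endpoint values
  have hHcont : Continuous H := by
    rw [hHdef]
    refine Continuous.sub (Continuous.sub ?_ ?_) ?_
    · exact continuous_const.mul (continuous_pow 2)
    · exact continuous_const.mul (continuous_pow 3)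
    · exact continuous_const.mul
        (continuous_iff_continuousAt.mpr fun x => Real.continuousAt_rpow_const x q (Or.inr hq0.le))
  have hH0 : H 0 = 0 := by
    simp [hHdef, Real.zero_rpow hq0.ne']
  have hHR0 : H R0 = 0 := by
    show (1 / 2) * R0 ^ 2 - a * R0 ^ 3 - b * R0 ^ q = 0
    rw [hHf R0 hR0pos, hfR0, mul_zero]
  have hHR1 : H R1 = 0 := by
    show (1 / 2) * R1 ^ 2 - a * R1 ^ 3 - b * R1 ^ q = 0
    rw [hHf R1 hR1pos, hfR1, mul_zero]
  refine ⟨R0, R1, hR0pos, hR01, ?_, ?_, ?_, ?_⟩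
  · -- zeros
    intro t ht
    rw [hHf t ht]
    constructor
    · intro h
      have hft : f t = 0 := by
        rcases mul_eq_zero.mp h with h' | h'
        · exact absurd h' (by positivity)
        · exact h'
      rcases lt_trichotomy t R0 with h1 | h1 | h1
      · exact absurd hft (ne_of_lt (hnegL t ht h1))
      · exact Or.inl h1
      · rcases lt_trichotomy t R1 with h2 | h2 | h2
        · exact absurd hft (ne_of_gt (hpos t h1 h2))
        · exact Or.inr h2
        · exact absurd hft (ne_of_lt (hnegR t h2))
    · rintro (rfl | rfl)
      · rw [hfR0, mul_zero]
      · rw [hfR1, mul_zero]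
  · -- positivity
    intro t ht
    rw [gt_iff_lt, hHf t ht]
    constructor
    · intro h
      have hft : 0 < f t := by
        by_contra hcon
        push_neg at hcon
        linarith [mul_nonneg (sq_nonneg t) (neg_nonneg.mpr hcon), h]
      constructor
      · by_contra hcon
        push_neg at hcon
        rcases eq_or_lt_of_le hcon with h1 | h1
        · rw [← h1] at hfR0; linarith
        · linarith [hnegL t ht h1]
      · by_contra hcon
        push_neg at hcon
        rcases eq_or_lt_of_le hcon with h1 | h1
        · rw [← h1] at hft
          linarith [hfR1]
        · linarith [hnegR t h1]
    · rintro ⟨h1, h2⟩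
      exact mul_pos (by positivity) (hpos t h1 h2)
  · -- local min
    obtain ⟨t0, ht0mem, ht0min⟩ := isCompact_Icc.exists_isMinOn
      (Set.nonempty_Icc.mpr hR0pos.le) hHcont.continuousOn
    have hmid : H (R0/2) < 0 := by
      show (1 / 2) * (R0/2) ^ 2 - a * (R0/2) ^ 3 - b * (R0/2) ^ q < 0
      rw [hHf _ (by linarith : (0:ℝ) < R0/2)]
      exact mul_neg_of_pos_of_neg (by positivity) (hnegL _ (by linarith) (by linarith))
    have ht0neg : H t0 < 0 :=
      lt_of_le_of_lt (isMinOn_iff.mp ht0min _ ⟨by linarith, by linarith⟩) hmid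
    have ht0Ioo : t0 ∈ Set.Ioo (0:ℝ) R0 := by
      constructor
      · rcases eq_or_lt_of_le ht0mem.1 with h | h
        · rw [← h, hH0] at ht0neg; exact absurd ht0neg (lt_irrefl 0)
        · exact h
      · rcases eq_or_lt_of_le ht0mem.2 with h | h
        · rw [h, hHR0] at ht0neg; exact absurd ht0neg (lt_irrefl 0)
        · exact h
    refine ⟨t0, ht0Ioo, ?_, ?_⟩
    · show ∀ᶠ y in nhds t0, H t0 ≤ H y
      filter_upwards [isOpen_Ioo.mem_nhds ht0Ioo] with y hy
      exact isMinOn_iff.mp ht0min y ⟨hy.1.le, hy.2.le⟩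
    · exact ht0neg
  · -- global max
    obtain ⟨t1, ht1mem, ht1max⟩ := isCompact_Icc.exists_isMaxOn
      (Set.nonempty_Icc.mpr hR01.le) hHcont.continuousOn
    have hHτpos : 0 < H τ := by
      show 0 < (1 / 2) * τ ^ 2 - a * τ ^ 3 - b * τ ^ q
      rw [hHf τ hτ]
      exact mul_pos (by positivity) hfτ
    have ht1pos : 0 < H t1 :=
      lt_of_lt_of_le hHτpos (isMaxOn_iff.mp ht1max τ ⟨hR0τ.le, hτR1.le⟩)
    have ht1Ioo : t1 ∈ Set.Ioo R0 R1 := by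
      constructor
      · rcases eq_or_lt_of_le ht1mem.1 with h | h
        · rw [← h, hHR0] at ht1pos; exact absurd ht1pos (lt_irrefl 0)
        · exact h
      · rcases eq_or_lt_of_le ht1mem.2 with h | h
        · rw [h, hHR1] at ht1pos; exact absurd ht1pos (lt_irrefl 0)
        · exact h
    refine ⟨t1, ht1Ioo, ht1pos, ?_⟩
    intro t ht
    show H t ≤ H t1
    by_cases hcase : t ∈ Set.Icc R0 R1
    · exact isMaxOn_iff.mp ht1max t hcase
    · have hneg : H t ≤ 0 := by
        rcases lt_or_ge t R0 with h | h
        · refine le_of_lt ?_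
          show (1 / 2) * t ^ 2 - a * t ^ 3 - b * t ^ q < 0
          rw [hHf t ht]
          exact mul_neg_of_pos_of_neg (by positivity) (hnegL t ht h)
        · have h2 : R1 < t := by
            rcases lt_or_ge R1 t with h2 | h2
            · exact h2
            · exact absurd ⟨h, h2⟩ hcase
          refine le_of_lt ?_
          show (1 / 2) * t ^ 2 - a * t ^ 3 - b * t ^ q < 0
          rw [hHf t ht]
          exact mul_neg_of_pos_of_neg (by positivity) (hnegR t h2)
      linarith


/-- For `0 < c < c_*`, the function
`h_c(t) = ½t² - (ΛC₄⁴c/2)t³ - (2|λ₃|C_p^p c^{p(1-δ_p)}/p) t^{pδ_p}` has exactly two zeros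
`0 < R₀ < R₁` in `(0,∞)`, is positive precisely on `(R₀,R₁)`, attains a strictly negative
local minimum on `(0,R₀)` and a strictly positive global maximum on `(R₀,R₁)`. -/
theorem stmt_10 (c lam3 p δp Λ C4 Cp : ℝ) (hc : 0 < c) (hlam3 : lam3 < 0)
    (hp : 2 < p) (hp' : p < 10 / 3) (hδ : δp = 3 * (p - 2) / (2 * p))
    (hΛ : 0 < Λ) (hC4 : 0 < C4) (hCp : 0 < Cp)
    (cstar : ℝ)
    (hcstar : cstar = (p / (4 * (3 - p * δp) * |lam3| * Cp ^ p) *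
        ((2 - p * δp) / ((3 - p * δp) * Λ * C4 ^ 4)) ^ (2 - p * δp))
          ^ (1 / (2 * (4 - p))))
    (hccstar : c < cstar) :
    ∃ R0 R1 : ℝ, 0 < R0 ∧ R0 < R1 ∧
      (∀ t : ℝ, 0 < t →
        ((1 / 2) * t ^ 2 - Λ * C4 ^ 4 * c / 2 * t ^ 3 -
            2 * |lam3| * Cp ^ p * c ^ (p * (1 - δp)) / p * t ^ (p * δp) = 0
          ↔ t = R0 ∨ t = R1)) ∧
      (∀ t : ℝ, 0 < t →
        ((1 / 2) * t ^ 2 - Λ * C4 ^ 4 * c / 2 * t ^ 3 -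
            2 * |lam3| * Cp ^ p * c ^ (p * (1 - δp)) / p * t ^ (p * δp) > 0
          ↔ R0 < t ∧ t < R1)) ∧
      (∃ t0 ∈ Set.Ioo 0 R0,
        IsLocalMin (fun t : ℝ => (1 / 2) * t ^ 2 - Λ * C4 ^ 4 * c / 2 * t ^ 3 -
            2 * |lam3| * Cp ^ p * c ^ (p * (1 - δp)) / p * t ^ (p * δp)) t0 ∧
        (1 / 2) * t0 ^ 2 - Λ * C4 ^ 4 * c / 2 * t0 ^ 3 -
            2 * |lam3| * Cp ^ p * c ^ (p * (1 - δp)) / p * t0 ^ (p * δp) < 0) ∧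
      (∃ t1 ∈ Set.Ioo R0 R1,
        ((1 / 2) * t1 ^ 2 - Λ * C4 ^ 4 * c / 2 * t1 ^ 3 -
            2 * |lam3| * Cp ^ p * c ^ (p * (1 - δp)) / p * t1 ^ (p * δp) > 0) ∧
        ∀ t : ℝ, 0 < t →
          (1 / 2) * t ^ 2 - Λ * C4 ^ 4 * c / 2 * t ^ 3 -
              2 * |lam3| * Cp ^ p * c ^ (p * (1 - δp)) / p * t ^ (p * δp) ≤
            (1 / 2) * t1 ^ 2 - Λ * C4 ^ 4 * c / 2 * t1 ^ 3 -
              2 * |lam3| * Cp ^ p * c ^ (p * (1 - δp)) / p * t1 ^ (p * δp)) := by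
  have hp0 : (0:ℝ) < p := by linarith
  have hq : p * δp = 3 * (p - 2) / 2 := by
    rw [hδ]; field_simp
  have hq0 : 0 < p * δp := by rw [hq]; linarith
  have hq2 : p * δp < 2 := by rw [hq]; linarith
  have h2q : (0:ℝ) < 2 - p * δp := by linarith
  have h3q : (0:ℝ) < 3 - p * δp := by linarith
  have habs : 0 < |lam3| := abs_pos.mpr hlam3.ne
  have hCpp : 0 < Cp ^ p := Real.rpow_pos_of_pos hCp p
  have hC44 : (0:ℝ) < C4 ^ 4 := by positivity
  have ha : 0 < Λ * C4 ^ 4 * c / 2 := by positivity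
  have hcm : 0 < c ^ (p * (1 - δp)) := Real.rpow_pos_of_pos hc _
  have hb : 0 < 2 * |lam3| * Cp ^ p * c ^ (p * (1 - δp)) / p :=
    div_pos (mul_pos (mul_pos (mul_pos two_pos habs) hCpp) hcm) hp0
  have hgood : (2 * |lam3| * Cp ^ p * c ^ (p * (1 - δp)) / p) * (2 - p * δp) /
        (Λ * C4 ^ 4 * c / 2) <
      ((2 - p * δp) / (2 * (Λ * C4 ^ 4 * c / 2) * (3 - p * δp))) ^ (3 - p * δp) := by
    have hW0 : 0 < (2 - p * δp) / ((3 - p * δp) * Λ * C4 ^ 4) :=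
      div_pos h2q (mul_pos (mul_pos h3q hΛ) hC44)
    set K := p / (4 * (3 - p * δp) * |lam3| * Cp ^ p) *
        ((2 - p * δp) / ((3 - p * δp) * Λ * C4 ^ 4)) ^ (2 - p * δp) with hKdef
    have hK0 : 0 < K := mul_pos
      (div_pos hp0 (mul_pos (mul_pos (mul_pos (by norm_num : (0:ℝ) < 4) h3q) habs) hCpp))
      (Real.rpow_pos_of_pos hW0 _)
    have hene : 2 * (4 - p) ≠ 0 := by
      have : (0:ℝ) < 2 * (4 - p) := by linarith
      exact this.ne'
    have hce : c ^ (2*(4-p)) < K := by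
      have h1 : c ^ (2*(4-p)) < cstar ^ (2*(4-p)) :=
        Real.rpow_lt_rpow hc.le hccstar (by linarith)
      have h2 : cstar ^ (2*(4-p)) = K := by
        rw [hcstar, ← Real.rpow_mul hK0.le, one_div, inv_mul_cancel₀ hene, Real.rpow_one]
      linarith
    have hstep1 : (2 - p * δp) / (2 * (Λ * C4 ^ 4 * c / 2) * (3 - p * δp)) =
        ((2 - p * δp) / ((3 - p * δp) * Λ * C4 ^ 4)) / c := by
      rw [div_div]
      congr 1
      ring
    rw [hstep1, Real.div_rpow hW0.le hc.le, lt_div_iff₀ (Real.rpow_pos_of_pos hc _)]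
    have hLHS : (2 * |lam3| * Cp ^ p * c ^ (p * (1 - δp)) / p) * (2 - p * δp) /
          (Λ * C4 ^ 4 * c / 2) * c ^ (3 - p * δp)
        = (4 * |lam3| * Cp ^ p * (2 - p * δp) / (p * (Λ * C4 ^ 4))) * c ^ (2*(4-p)) := by
      have hcc : c ^ (p * (1 - δp)) * c ^ (3 - p * δp) / c = c ^ (2*(4-p)) := by
        rw [← Real.rpow_add hc, ← Real.rpow_sub_one hc.ne']
        congr 1
        rw [hδ]; field_simp; ring
      rw [← hcc]
      field_simp
      ring
    rw [hLHS]
    have hF : 0 < 4 * |lam3| * Cp ^ p * (2 - p * δp) / (p * (Λ * C4 ^ 4)) :=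
      div_pos (mul_pos (mul_pos (mul_pos (by norm_num : (0:ℝ) < 4) habs) hCpp) h2q)
        (mul_pos hp0 (mul_pos hΛ hC44))
    calc 4 * |lam3| * Cp ^ p * (2 - p * δp) / (p * (Λ * C4 ^ 4)) * c ^ (2*(4-p))
        < 4 * |lam3| * Cp ^ p * (2 - p * δp) / (p * (Λ * C4 ^ 4)) * K :=
          mul_lt_mul_of_pos_left hce hF
      _ = ((2 - p * δp) / ((3 - p * δp) * Λ * C4 ^ 4)) ^ (3 - p * δp) := by
          have hWsplit : ((2 - p * δp) / ((3 - p * δp) * Λ * C4 ^ 4)) ^ (3 - p * δp)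
              = ((2 - p * δp) / ((3 - p * δp) * Λ * C4 ^ 4)) ^ (2 - p * δp) *
                ((2 - p * δp) / ((3 - p * δp) * Λ * C4 ^ 4)) := by
            rw [← Real.rpow_add_one hW0.ne']
            congr 1
            ring
          rw [hKdef, hWsplit]
          field_simp
  exact two_zeros _ _ _ ha hb hq0 hq2 hgood
end

section
/- Let $(\lambda_1,\lambda_2)\in D_0$, $\lambda_3<0$, $2<p<\frac{10}{3}$, $c>0$, and let $u\in S_c$ with $E(u)<0$ solve the stationary equation with Lagrange multiplier $\mu_c$, so that $P(u)=2\|\nabla u\|_2^2+3B(u)-4|\lambda_3|\delta_p\|u\|_p^p=0$ and $\mu_c c^2=-\frac{1}{2}\|\nabla u\|_2^2-B(u)+|\lambda_3|\|u\|_p^p$. If moreover $E(u)<-\kappa_{p,\lambda_3}c^{\frac{6-p}{2-p\delta_p}}$, then $\mu_c c^2 = -E(u)-\frac{1}{2}B(u)+\frac{(p-2)|\lambda_3|}{p}\|u\|_p^p>\kappa_{p,\lambda_3}c^{\frac{6-p}{2-p\delta_p}}$, i.e., $\mu_c>\kappa_{p,\lambda_3}c^{\frac{2(p-2)}{2-p\delta_p}}$.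 -/
open Real MeasureTheory

noncomputable section

abbrev E3 : Type := EuclideanSpace ℝ (Fin 3)

def InH1 (u : E3 → ℝ) : Prop :=
  MemLp u 2 volume ∧ MemLp (fun x => fderiv ℝ u x) 2 volume

def dipK (x : E3) : ℝ := (1 - 3 * (x 2) ^ 2 / ‖x‖ ^ 2) / ‖x‖ ^ 3

def Bdip (l1 l2 : ℝ) (u : E3 → ℝ) : ℝ :=
  ∫ x : E3, (l1 * (u x) ^ 4 + l2 * (∫ y : E3, dipK (x - y) * (u y) ^ 2) * (u x) ^ 2)

def Efun (l1 l2 l3 p : ℝ) (u : E3 → ℝ) : ℝ :=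
  (1 / 2) * (∫ x : E3, ‖fderiv ℝ u x‖ ^ 2) + (1 / 2) * Bdip l1 l2 u +
    (2 * l3 / p) * ∫ x : E3, |u x| ^ p

/-- Lower bound for the Lagrange multiplier: if `u ∈ S_c` satisfies the Pohozaev identity
`P(u) = 0`, the multiplier identity, and `E(u) < -κ_{p,λ₃} c^{(6-p)/(2-pδ_p)}`, then
`μ_c c² = -E(u) - ½B(u) + ((p-2)|λ₃|/p)‖u‖_p^p > κ_{p,λ₃} c^{(6-p)/(2-pδ_p)}`, i.e.
`μ_c > κ_{p,λ₃} c^{2(p-2)/(2-pδ_p)}`. -/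
theorem stmt_19 (l1 l2 l3 p c δp Cp κ μc : ℝ)
    (hD0 : (l1 < 4 * π / 3 * l2 ∧ 4 * π / 3 * l2 ≤ 0) ∨
           (l1 < -(8 * π / 3) * l2 ∧ -(8 * π / 3) * l2 ≤ 0))
    (hl3 : l3 < 0) (hp : 2 < p) (hp' : p < 10 / 3)
    (hδ : δp = 3 * (p - 2) / (2 * p)) (hCp : 0 < Cp) (hc : 0 < c)
    (hκ : κ = (10 - 3 * p) / (6 * (p - 2)) *
        (2 * δp * Cp ^ p * |l3|) ^ (2 / (2 - p * δp)))
    (u : E3 → ℝ) (hu : InH1 u) (hmass : (∫ x : E3, (u x) ^ 2) = c ^ 2)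
    (hEneg : Efun l1 l2 l3 p u < 0)
    (hP : 2 * (∫ x : E3, ‖fderiv ℝ u x‖ ^ 2) + 3 * Bdip l1 l2 u -
        4 * |l3| * δp * (∫ x : E3, |u x| ^ p) = 0)
    (hμ : μc * c ^ 2 = -(1 / 2) * (∫ x : E3, ‖fderiv ℝ u x‖ ^ 2) - Bdip l1 l2 u +
        |l3| * ∫ x : E3, |u x| ^ p)
    (hE : Efun l1 l2 l3 p u < -κ * c ^ ((6 - p) / (2 - p * δp))) :
    μc * c ^ 2 = -(Efun l1 l2 l3 p u) - (1 / 2) * Bdip l1 l2 u +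
        (p - 2) * |l3| / p * (∫ x : E3, |u x| ^ p) ∧
    μc * c ^ 2 > κ * c ^ ((6 - p) / (2 - p * δp)) ∧
    μc > κ * c ^ (2 * (p - 2) / (2 - p * δp)) := by

  have hp0 : p ≠ 0 := by linarith
  have hl3' : |l3| = -l3 := abs_of_neg hl3
  set G := ∫ x : E3, ‖fderiv ℝ u x‖ ^ 2 with hGdef
  set B := Bdip l1 l2 u with hBdef
  set N := ∫ x : E3, |u x| ^ p with hNdef
  have hG : 0 ≤ G := integral_nonneg fun x => by positivity
  have hEfun : Efun l1 l2 l3 p u = (1 / 2) * G + (1 / 2) * B + (2 * l3 / p) * N := rfl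
  rw [hl3'] at hμ hP ⊢
  have part1 : μc * c ^ 2 = -(Efun l1 l2 l3 p u) - (1 / 2) * B +
      (p - 2) * (-l3) / p * N := by
    rw [hμ, hEfun]; field_simp; ring
  have key : μc * c ^ 2 = -(Efun l1 l2 l3 p u) + G / 3 := by
    rw [hμ, hEfun, hδ] at *
    field_simp at hP ⊢
    nlinarith [hP]
  have h2 : μc * c ^ 2 > κ * c ^ ((6 - p) / (2 - p * δp)) := by
    rw [key]; linarith
  refine ⟨part1, h2, ?_⟩
  have hden : 2 - p * δp = (10 - 3 * p) / 2 := by rw [hδ]; field_simp; ring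
  have hden0 : (2 : ℝ) - p * δp ≠ 0 := by rw [hden]; intro h; nlinarith
  have hαβ : (6 - p) / (2 - p * δp) = 2 * (p - 2) / (2 - p * δp) + 2 := by
    field_simp; linarith [hden]
  have hcr : c ^ ((6 - p) / (2 - p * δp)) =
      c ^ (2 * (p - 2) / (2 - p * δp)) * c ^ 2 := by
    rw [hαβ, Real.rpow_add hc]
    norm_num [Real.rpow_natCast]
  rw [hcr, ← mul_assoc] at h2
  exact (mul_lt_mul_iff_of_pos_right (by positivity : (0:ℝ) < c ^ 2)).mp h2
end
end
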